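/- arXiv:1608.05095 — 4 statements merged into one kernel-verified Lean document; each statement's English description precedes it below -/
import Mathlib

section
/- For the Poisson(z) random variable truncated at k (i.e., conditioned on being ≥ k), with φ_r(z) := z·P(Poi(z)=r−1)/P(Poi(z)≥r) (and φ_{-1}=φ_0:=0), one has Var(Z) = E[Z]·(1 − φ_k(z) + φ_{k−1}(z)). -/
open Real Filter Set

/-- `truncExpSum k z = Σ_{j≥k} z^j/j!`. -/
noncomputable def truncExpSum (k : ℕ) (z : ℝ) : ℝ :=
  ∑' j : ℕ, if k ≤ j then z ^ j / (Nat.factorial j : ℝ) else 0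

/-- `poisTail k z = P(Poi(z) ≥ k) = e^{-z} Σ_{j≥k} z^j/j!`. -/
noncomputable def poisTail (k : ℕ) (z : ℝ) : ℝ := Real.exp (-z) * truncExpSum k z

/-- Mean of Poisson(z) conditioned on being ≥ k: `ψ_k(z) = z f_{k-1}(z)/f_k(z)`. -/
noncomputable def truncMean (k : ℕ) (z : ℝ) : ℝ :=
  z * truncExpSum (k - 1) z / truncExpSum k z

/-- Second moment of the truncated Poisson. -/
noncomputable def truncSecondMoment (k : ℕ) (z : ℝ) : ℝ :=
  (∑' j : ℕ, if k ≤ j then (j : ℝ) ^ 2 * z ^ j / (Nat.factorial j : ℝ) else 0)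
    / truncExpSum k z

/-- Variance of the truncated Poisson. -/
noncomputable def truncVar (k : ℕ) (z : ℝ) : ℝ :=
  truncSecondMoment k z - (truncMean k z) ^ 2

/-- `φ_r(z) = z·P(Poi(z)=r−1)/P(Poi(z)≥r)` for `r ≥ 1`, with `φ_0 := 0`. -/
noncomputable def phiP (r : ℕ) (z : ℝ) : ℝ :=
  if r = 0 then 0
  else z * (Real.exp (-z) * z ^ (r - 1) / (Nat.factorial (r - 1) : ℝ)) / poisTail r z

/-- `H(z_i,z_o) = (1 − φ_{k_1}(z_i))(1 − φ_{k_2}(z_o)) − φ_{k_1−1}(z_i)φ_{k_2−1}(z_o)`. -/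
noncomputable def Hfun (k1 k2 : ℕ) (zi zo : ℝ) : ℝ :=
  (1 - phiP k1 zi) * (1 - phiP k2 zo) - phiP (k1 - 1) zi * phiP (k2 - 1) zo

/-- `Ψ(z_i,z_o) = max{ z_i/(p_{k_1}(z_i)p_{k_2−1}(z_o)), z_o/(p_{k_2}(z_o)p_{k_1−1}(z_i)) }`. -/
noncomputable def Psi (k1 k2 : ℕ) (zi zo : ℝ) : ℝ :=
  max (zi / (poisTail k1 zi * poisTail (k2 - 1) zo))
      (zo / (poisTail k2 zo * poisTail (k1 - 1) zi))

lemma summable_trunc (k : ℕ) (z : ℝ) :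
    Summable (fun j : ℕ => if k ≤ j then z ^ j / (Nat.factorial j : ℝ) else 0) := by
  have h := (Real.summable_pow_div_factorial z).indicator {j | k ≤ j}
  refine h.congr fun j => ?_
  simp [Set.indicator_apply, Set.mem_setOf_eq]

lemma trunc_rec (k : ℕ) (z : ℝ) :
    truncExpSum k z = truncExpSum (k+1) z + z ^ k / (Nat.factorial k : ℝ) := by
  unfold truncExpSum
  have h : ∀ j : ℕ, (if k ≤ j then z ^ j / (Nat.factorial j : ℝ) else 0)
      = (if k+1 ≤ j then z ^ j / (Nat.factorial j : ℝ) else 0)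
        + (if j = k then z ^ k / (Nat.factorial k : ℝ) else 0) := by
    intro j
    rcases eq_or_ne j k with rfl | hne
    · simp
    · split_ifs with h1 h2 h3 <;> first | omega | simp | (exfalso; omega)
  rw [tsum_congr h, Summable.tsum_add (summable_trunc _ _) (hasSum_ite_eq k _).summable,
    tsum_ite_eq]

lemma trunc_pos (k : ℕ) (z : ℝ) (hz : 0 < z) : 0 < truncExpSum k z := by
  refine Summable.tsum_pos (summable_trunc k z) (fun j => ?_) k ?_
  · split_ifs <;> positivity
  · simp only [le_refl, if_true]
    positivity

lemma tsum_j (m : ℕ) (z : ℝ) :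
    (∑' i : ℕ, if m ≤ i then (i : ℝ) * z ^ i / (Nat.factorial i : ℝ) else 0)
      = z * truncExpSum (m - 1) z := by
  set f : ℕ → ℝ := fun i => if m ≤ i then (i : ℝ) * z ^ i / (Nat.factorial i : ℝ) else 0 with hf
  have hshift : ∀ i : ℕ, f (i+1)
      = z * (if m - 1 ≤ i then z ^ i / (Nat.factorial i : ℝ) else 0) := by
    intro i
    simp only [hf]
    split_ifs with h1 h2
    · rw [Nat.factorial_succ, pow_succ]
      push_cast
      have : (i : ℝ) + 1 ≠ 0 := by positivity
      field_simp
    · omega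
    · omega
    · simp
  have hs1 : Summable (fun i => f (i+1)) := by
    simp only [hshift]
    exact (summable_trunc (m-1) z).mul_left z
  have hsf : Summable f := (summable_nat_add_iff 1).mp hs1
  rw [Summable.tsum_eq_zero_add hsf]
  have hf0 : f 0 = 0 := by simp [hf]
  rw [hf0, zero_add]
  simp only [hshift]
  rw [tsum_mul_left]
  rfl

lemma tsum_j2 (k : ℕ) (z : ℝ) :
    (∑' j : ℕ, if k ≤ j then (j : ℝ) ^ 2 * z ^ j / (Nat.factorial j : ℝ) else 0)
      = z * (z * truncExpSum (k - 1 - 1) z + truncExpSum (k - 1) z) := by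
  set g : ℕ → ℝ := fun j => if k ≤ j then (j : ℝ) ^ 2 * z ^ j / (Nat.factorial j : ℝ) else 0
    with hg
  have hshift : ∀ i : ℕ, g (i+1)
      = z * ((if k - 1 ≤ i then (i : ℝ) * z ^ i / (Nat.factorial i : ℝ) else 0)
          + (if k - 1 ≤ i then z ^ i / (Nat.factorial i : ℝ) else 0)) := by
    intro i
    simp only [hg]
    split_ifs with h1 h2
    · rw [Nat.factorial_succ, pow_succ]
      push_cast
      have : (i : ℝ) + 1 ≠ 0 := by positivity
      field_simp
      ring
    · omega
    · omega
    · simp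
  have hsum1 : Summable (fun i : ℕ => if k - 1 ≤ i then (i : ℝ) * z ^ i / (Nat.factorial i : ℝ) else 0) := by
    have := tsum_j (k-1) z  -- summability extracted below instead
    set f : ℕ → ℝ := fun i => if k - 1 ≤ i then (i : ℝ) * z ^ i / (Nat.factorial i : ℝ) else 0 with hf
    have hshift' : ∀ i : ℕ, f (i+1)
        = z * (if k - 1 - 1 ≤ i then z ^ i / (Nat.factorial i : ℝ) else 0) := by
      intro i
      simp only [hf]
      split_ifs with h1 h2
      · rw [Nat.factorial_succ, pow_succ]
        push_cast
        have : (i : ℝ) + 1 ≠ 0 := by positivity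
        field_simp
      · omega
      · omega
      · simp
    have hs1 : Summable (fun i => f (i+1)) := by
      simp only [hshift']
      exact (summable_trunc (k-1-1) z).mul_left z
    exact (summable_nat_add_iff 1).mp hs1
  have hs1 : Summable (fun i => g (i+1)) := by
    simp only [hshift]
    exact (hsum1.add (summable_trunc (k-1) z)).mul_left z
  have hsg : Summable g := (summable_nat_add_iff 1).mp hs1
  rw [Summable.tsum_eq_zero_add hsg]
  have hg0 : g 0 = 0 := by simp [hg]
  rw [hg0, zero_add]
  simp only [hshift]
  rw [tsum_mul_left, Summable.tsum_add hsum1 (summable_trunc (k-1) z), tsum_j]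
  rfl

lemma phi_eq (k : ℕ) (z : ℝ) (hz : 0 < z) :
    phiP k z = z * (truncExpSum (k - 1) z - truncExpSum k z) / truncExpSum k z := by
  rcases k with _ | n
  · simp [phiP]
  · have hrec : truncExpSum n z = truncExpSum (n+1) z + z ^ n / (Nat.factorial n : ℝ) :=
      trunc_rec n z
    have he : Real.exp (-z) ≠ 0 := Real.exp_ne_zero _
    have hr := (trunc_pos (n+1) z hz).ne'
    unfold phiP poisTail
    simp only [Nat.succ_ne_zero, if_false, Nat.succ_sub_one]
    rw [show truncExpSum n z - truncExpSum (n+1) z = z ^ n / (Nat.factorial n : ℝ) by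
      rw [hrec]; ring]
    field_simp

/-- `Var(Z) = E[Z](1 − φ_k(z) + φ_{k−1}(z))` for the Poisson truncated at `k`. -/
theorem stmt1 (k : ℕ) (z : ℝ) (hz : 0 < z) :
    truncVar k z = truncMean k z * (1 - phiP k z + phiP (k - 1) z) := by
  have hr := trunc_pos k z hz
  have hq := trunc_pos (k-1) z hz
  rw [truncVar, truncSecondMoment, truncMean, tsum_j2, phi_eq k z hz, phi_eq (k-1) z hz]
  field_simp
  ring
end

section
/- For every integer k ≥ 0 and z > 0, the truncated-Poisson mean ψ_k(z) = z·f_{k−1}(z)/f_k(z) satisfies lim_{z→0+} ψ_k(z) = k and lim_{z→∞} ψ_k(z) = ∞; consequently, for any m > k the equation ψ_k(z) = m has a unique positive root z. -/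
open Real Filter Set

namespace Stmt2Aux

lemma exp_eq_tsum (z : ℝ) : Real.exp z = ∑' n : ℕ, z ^ n / (Nat.factorial n : ℝ) := by
  rw [Real.exp_eq_exp_ℝ, NormedSpace.exp_eq_tsum_div]

lemma summable_ite (f : ℕ → ℝ) (hf : Summable f) (k : ℕ) :
    Summable (fun j => if k ≤ j then f j else 0) :=
  (hf.indicator {j | k ≤ j}).congr fun j => by
    simp [Set.indicator_apply, Set.mem_setOf_eq]

lemma tsum_ite_shift (a : ℕ → ℝ) (k : ℕ) :
    (∑' j : ℕ, if k ≤ j then a j else 0) = ∑' i : ℕ, a (i + k) := by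
  have hinj : Function.Injective (· + k : ℕ → ℕ) := add_left_injective k
  have h := hinj.tsum_eq (f := fun j => if k ≤ j then a j else 0) ?_
  · rw [← h]
    congr 1; funext i; simp [Nat.le_add_left]
  · intro x hx
    simp only [Function.mem_support, ne_eq, ite_eq_right_iff, not_forall] at hx
    obtain ⟨hkx, -⟩ := hx
    exact ⟨x - k, by simpa using Nat.sub_add_cancel hkx⟩

lemma summable_jpow (z : ℝ) : Summable (fun j : ℕ => (j : ℝ) * z ^ j / (Nat.factorial j : ℝ)) := by
  rw [← summable_nat_add_iff 1]
  have : (fun n : ℕ => ((n + 1 : ℕ) : ℝ) * z ^ (n + 1) / (Nat.factorial (n + 1) : ℝ))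
      = fun n : ℕ => z * (z ^ n / (Nat.factorial n : ℝ)) := by
    funext n
    rw [Nat.factorial_succ]
    push_cast
    have h0 : ((Nat.factorial n : ℝ)) ≠ 0 := Nat.cast_ne_zero.2 n.factorial_ne_zero
    field_simp
    ring
  exact this ▸ (Real.summable_pow_div_factorial z).mul_left z

lemma truncExpSum_shift (k : ℕ) (z : ℝ) :
    truncExpSum k z = ∑' i : ℕ, z ^ (i + k) / (Nat.factorial (i + k) : ℝ) :=
  tsum_ite_shift _ k

lemma truncExpSum_closed (k : ℕ) (z : ℝ) :
    truncExpSum k z = Real.exp z - ∑ j ∈ Finset.range k, z ^ j / (Nat.factorial j : ℝ) := by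
  have h := Summable.sum_add_tsum_nat_add (f := fun j : ℕ => z ^ j / (Nat.factorial j : ℝ)) k
    (Real.summable_pow_div_factorial z)
  rw [truncExpSum_shift, exp_eq_tsum]
  linarith [h]

lemma truncExpSum_pos (k : ℕ) {z : ℝ} (hz : 0 < z) : 0 < truncExpSum k z := by
  rw [truncExpSum_shift]
  have hsum : Summable (fun i : ℕ => z ^ (i + k) / (Nat.factorial (i + k) : ℝ)) :=
    (summable_nat_add_iff k).2 (Real.summable_pow_div_factorial z)
  refine Summable.tsum_pos hsum (fun i => by positivity) 0 (by positivity)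

lemma truncExpSum_summable (k : ℕ) (z : ℝ) :
    Summable (fun j : ℕ => if k ≤ j then z ^ j / (Nat.factorial j : ℝ) else 0) :=
  summable_ite _ (Real.summable_pow_div_factorial z) k

lemma summable_ite_jpow (k : ℕ) (z : ℝ) :
    Summable (fun j : ℕ => if k ≤ j then (j : ℝ) * z ^ j / (Nat.factorial j : ℝ) else 0) :=
  summable_ite _ (summable_jpow z) k

lemma truncExpSum_anti {k l : ℕ} (hkl : k ≤ l) {z : ℝ} (hz : 0 ≤ z) :
    truncExpSum l z ≤ truncExpSum k z := by
  refine Summable.tsum_le_tsum (fun j => ?_) (truncExpSum_summable l z) (truncExpSum_summable k z)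
  by_cases h : l ≤ j
  · simp [h, le_trans hkl h]
  · have : (0:ℝ) ≤ if k ≤ j then z ^ j / (Nat.factorial j : ℝ) else 0 := by
      split <;> positivity
    simpa [h] using this

lemma le_truncMean (k : ℕ) {z : ℝ} (hz : 0 < z) : z ≤ truncMean k z := by
  unfold truncMean
  rw [le_div_iff₀ (truncExpSum_pos k hz)]
  have h := truncExpSum_anti (Nat.sub_le k 1) hz.le
  nlinarith [truncExpSum_pos k hz]

/-- numerator identity: `z f_{k-1}(z) = Σ_{j≥k} j z^j/j!`. -/
lemma mul_truncExpSum (k : ℕ) (z : ℝ) :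
    z * truncExpSum (k - 1) z
      = ∑' j : ℕ, (if k ≤ j then (j : ℝ) * z ^ j / (Nat.factorial j : ℝ) else 0) := by
  have key : ∀ n : ℕ, ∀ i : ℕ,
      ((i + n + 1 : ℕ) : ℝ) * z ^ (i + n + 1) / (Nat.factorial (i + n + 1) : ℝ)
        = z * (z ^ (i + n) / (Nat.factorial (i + n) : ℝ)) := by
    intro n i
    rw [show i + n + 1 = (i + n) + 1 from rfl, Nat.factorial_succ, pow_succ]
    have h0 : ((Nat.factorial (i + n) : ℝ)) ≠ 0 := Nat.cast_ne_zero.2 (i + n).factorial_ne_zero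
    push_cast
    field_simp
  cases k with
  | zero =>
      simp only [Nat.zero_sub, Nat.zero_le, if_true]
      rw [truncExpSum_shift]
      rw [Summable.tsum_eq_zero_add (summable_jpow z)]
      simp only [Nat.cast_zero, zero_mul, Nat.factorial_zero, zero_div, zero_add]
      rw [← tsum_mul_left]
      congr 1
      funext i
      simpa using (key 0 i).symm
  | succ n =>
      simp only [Nat.succ_sub_one]
      rw [truncExpSum_shift, tsum_ite_shift (fun j => (j : ℝ) * z ^ j / (Nat.factorial j : ℝ)) (n+1),
        ← tsum_mul_left]
      congr 1
      funext i
      have := key n i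
      simpa [show i + (n + 1) = i + n + 1 by ring] using this.symm

end Stmt2Aux
namespace Stmt2Aux

lemma truncExpSum_lower (k : ℕ) {z : ℝ} (hz : 0 < z) :
    z ^ k / (Nat.factorial k : ℝ) ≤ truncExpSum k z := by
  rw [truncExpSum_shift]
  have hsum : Summable (fun i : ℕ => z ^ (i + k) / (Nat.factorial (i + k) : ℝ)) :=
    (summable_nat_add_iff k).2 (Real.summable_pow_div_factorial z)
  have := Summable.le_tsum hsum 0 (fun i _ => by positivity)
  simpa using this

lemma truncExpSum_upper (k : ℕ) {z : ℝ} (hz : 0 < z) (hz1 : z < 1) :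
    truncExpSum k z ≤ z ^ k / (Nat.factorial k : ℝ) * (1 - z)⁻¹ := by
  rw [truncExpSum_shift]
  have hsum : Summable (fun i : ℕ => z ^ (i + k) / (Nat.factorial (i + k) : ℝ)) :=
    (summable_nat_add_iff k).2 (Real.summable_pow_div_factorial z)
  have hgeo : Summable (fun i : ℕ => z ^ k / (Nat.factorial k : ℝ) * z ^ i) :=
    (summable_geometric_of_lt_one hz.le hz1).mul_left _
  have hle : ∀ i : ℕ, z ^ (i + k) / (Nat.factorial (i + k) : ℝ)
      ≤ z ^ k / (Nat.factorial k : ℝ) * z ^ i := by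
    intro i
    rw [pow_add]
    have hfac : (Nat.factorial k : ℝ) ≤ (Nat.factorial (i + k) : ℝ) :=
      Nat.cast_le.2 (Nat.factorial_le (Nat.le_add_left k i))
    have h1 : (0:ℝ) < (Nat.factorial k : ℝ) := by positivity
    have h2 : (0:ℝ) < (Nat.factorial (i + k) : ℝ) := by positivity
    rw [div_le_iff₀ h2]
    calc z ^ i * z ^ k = z ^ k * z ^ i := by ring
    _ ≤ z ^ k / (Nat.factorial k : ℝ) * z ^ i * (Nat.factorial k : ℝ) := by
        rw [div_mul_eq_mul_div]
        field_simp
        exact le_refl _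
    _ ≤ z ^ k / (Nat.factorial k : ℝ) * z ^ i * (Nat.factorial (i + k) : ℝ) := by
        have : (0:ℝ) ≤ z ^ k / (Nat.factorial k : ℝ) * z ^ i := by positivity
        nlinarith
  calc (∑' i : ℕ, z ^ (i + k) / (Nat.factorial (i + k) : ℝ))
      ≤ ∑' i : ℕ, z ^ k / (Nat.factorial k : ℝ) * z ^ i := Summable.tsum_le_tsum hle hsum hgeo
    _ = z ^ k / (Nat.factorial k : ℝ) * (1 - z)⁻¹ := by
        rw [tsum_mul_left, tsum_geometric_of_lt_one hz.le hz1]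

lemma truncMean_zero_eq {z : ℝ} : truncMean 0 z = z := by
  unfold truncMean
  have h : truncExpSum 0 z = Real.exp z := by
    rw [truncExpSum_closed]; simp
  rw [show (0:ℕ) - 1 = 0 from rfl, h]
  field_simp [Real.exp_ne_zero]

lemma truncMean_tendsto_zero (k : ℕ) :
    Tendsto (truncMean k) (nhdsWithin 0 (Set.Ioi 0)) (nhds (k : ℝ)) := by
  cases k with
  | zero =>
      simp only [Nat.cast_zero]
      have : Tendsto (fun z : ℝ => z) (nhdsWithin 0 (Set.Ioi 0)) (nhds 0) :=
        tendsto_id.mono_left nhdsWithin_le_nhds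
      exact this.congr fun z => truncMean_zero_eq.symm
  | succ n =>
      set K : ℝ := ((n : ℝ) + 1)
      have hev : ∀ᶠ z : ℝ in nhdsWithin 0 (Set.Ioi 0), 0 < z ∧ z < 1 := by
        filter_upwards [self_mem_nhdsWithin,
          eventually_nhdsWithin_of_eventually_nhds (eventually_lt_nhds (by norm_num : (0:ℝ) < 1))]
          with z h1 h2
        exact ⟨h1, h2⟩
      have hbound : ∀ᶠ z : ℝ in nhdsWithin 0 (Set.Ioi 0),
          K * (1 - z) ≤ truncMean (n+1) z ∧ truncMean (n+1) z ≤ K * (1 - z)⁻¹ := by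
        filter_upwards [hev] with z hz
        obtain ⟨hz0, hz1⟩ := hz
        have h1z : (0:ℝ) < 1 - z := by linarith
        have hfn : (0:ℝ) < (Nat.factorial n : ℝ) := by positivity
        have hfn1 : (0:ℝ) < (Nat.factorial (n+1) : ℝ) := by positivity
        have hNl := truncExpSum_lower n hz0
        have hNu := truncExpSum_upper n hz0 hz1
        have hDl := truncExpSum_lower (n+1) hz0
        have hDu := truncExpSum_upper (n+1) hz0 hz1
        have hDpos := truncExpSum_pos (n+1) hz0
        have hfacs : (Nat.factorial (n+1) : ℝ) = ((n:ℝ)+1) * (Nat.factorial n : ℝ) := by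
          rw [Nat.factorial_succ]; push_cast; ring
        unfold truncMean
        simp only [Nat.succ_sub_one]
        constructor
        · rw [le_div_iff₀ hDpos]
          calc K * (1 - z) * truncExpSum (n+1) z
              ≤ K * (1 - z) * (z ^ (n+1) / (Nat.factorial (n+1) : ℝ) * (1 - z)⁻¹) := by
                apply mul_le_mul_of_nonneg_left hDu (by positivity)
            _ = z * (z ^ n / (Nat.factorial n : ℝ)) := by
                rw [hfacs]
                field_simp [K]
                ring
            _ ≤ z * truncExpSum n z := by
                apply mul_le_mul_of_nonneg_left hNl hz0.le
        · rw [div_le_iff₀ hDpos]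
          calc z * truncExpSum n z
              ≤ z * (z ^ n / (Nat.factorial n : ℝ) * (1 - z)⁻¹) :=
                mul_le_mul_of_nonneg_left hNu hz0.le
            _ = K * (1 - z)⁻¹ * (z ^ (n+1) / (Nat.factorial (n+1) : ℝ)) := by
                rw [hfacs]
                field_simp [K]
                ring
            _ ≤ K * (1 - z)⁻¹ * truncExpSum (n+1) z := by
                apply mul_le_mul_of_nonneg_left hDl (by positivity)
      have hlow : Tendsto (fun z : ℝ => K * (1 - z)) (nhdsWithin 0 (Set.Ioi 0)) (nhds ((n:ℝ)+1)) := by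
        have : Tendsto (fun z : ℝ => K * (1 - z)) (nhds 0) (nhds (K * (1 - 0))) :=
          (continuous_const.mul (continuous_const.sub continuous_id)).tendsto 0
        simpa [K] using this.mono_left nhdsWithin_le_nhds
      have hup : Tendsto (fun z : ℝ => K * (1 - z)⁻¹) (nhdsWithin 0 (Set.Ioi 0)) (nhds ((n:ℝ)+1)) := by
        have hc : ContinuousAt (fun z : ℝ => K * (1 - z)⁻¹) 0 := by
          apply ContinuousAt.mul continuousAt_const
          exact (ContinuousAt.inv₀ (continuousAt_const.sub continuousAt_id) (by norm_num))
        have := hc.tendsto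
        simpa [K] using this.mono_left nhdsWithin_le_nhds
      have := tendsto_of_tendsto_of_tendsto_of_le_of_le' hlow hup
        (hbound.mono fun z h => h.1) (hbound.mono fun z h => h.2)
      simpa [K] using this

lemma truncMean_tendsto_atTop (k : ℕ) : Tendsto (truncMean k) atTop atTop := by
  apply tendsto_atTop_mono' atTop _ tendsto_id
  filter_upwards [eventually_gt_atTop (0:ℝ)] with z hz
  exact le_truncMean k hz

end Stmt2Aux
namespace Stmt2Aux

lemma cross_le {x y : ℝ} (hx : 0 < x) (hxy : x ≤ y) {b a : ℕ} (hba : b ≤ a) :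
    x ^ a * y ^ b ≤ x ^ b * y ^ a := by
  have hy : 0 < y := lt_of_lt_of_le hx hxy
  have hxa : x ^ a = x ^ b * x ^ (a - b) := by
    rw [← pow_add]; congr 1; omega
  have hya : y ^ a = y ^ b * y ^ (a - b) := by
    rw [← pow_add]; congr 1; omega
  calc x ^ a * y ^ b = x ^ b * y ^ b * x ^ (a - b) := by rw [hxa]; ring
    _ ≤ x ^ b * y ^ b * y ^ (a - b) := by
        apply mul_le_mul_of_nonneg_left (pow_le_pow_left₀ hx.le hxy _) (by positivity)
    _ = x ^ b * y ^ a := by rw [hya]; ring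

/-- Core cross inequality used in strict monotonicity, symmetrized. -/
lemma sym_nonneg {x y : ℝ} (hx : 0 < x) (hxy : x ≤ y) (a b : ℕ) :
    0 ≤ ((a : ℝ) - (b : ℝ)) * (y ^ a * x ^ b - x ^ a * y ^ b) := by
  rcases le_total b a with h | h
  · apply mul_nonneg
    · have : (b:ℝ) ≤ (a:ℝ) := by exact_mod_cast h
      linarith
    · have := cross_le hx hxy h
      linarith
  · have h1 : (a:ℝ) - (b:ℝ) ≤ 0 := by
      have : (a:ℝ) ≤ (b:ℝ) := by exact_mod_cast h
      linarith
    have h2 : y ^ a * x ^ b - x ^ a * y ^ b ≤ 0 := by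
      have := cross_le hx hxy (a := b) (b := a) h
      linarith
    nlinarith

lemma truncMean_strictMonoOn (k : ℕ) : StrictMonoOn (truncMean k) (Set.Ioi (0:ℝ)) := by
  intro x hx y hy hxy
  simp only [Set.mem_Ioi] at hx hy
  set s : ℝ → ℕ → ℝ := fun z j => if k ≤ j then z ^ j / (Nat.factorial j : ℝ) else 0 with hs_def
  set t : ℝ → ℕ → ℝ := fun z j => if k ≤ j then (j:ℝ) * z ^ j / (Nat.factorial j : ℝ) else 0
    with ht_def
  have hs_sum : ∀ z : ℝ, Summable (s z) := fun z => truncExpSum_summable k z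
  have ht_sum : ∀ z : ℝ, Summable (t z) := fun z => summable_ite_jpow k z
  have hs_nn : ∀ z : ℝ, 0 < z → ∀ j, 0 ≤ s z j := by
    intro z hz j; simp only [hs_def]; split <;> positivity
  have ht_nn : ∀ z : ℝ, 0 < z → ∀ j, 0 ≤ t z j := by
    intro z hz j; simp only [ht_def]; split <;> positivity
  have hnorm_s : ∀ z : ℝ, 0 < z → Summable (fun j => ‖s z j‖) := fun z hz =>
    (hs_sum z).congr fun j => (Real.norm_of_nonneg (hs_nn z hz j)).symm
  have hnorm_t : ∀ z : ℝ, 0 < z → Summable (fun j => ‖t z j‖) := fun z hz =>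
    (ht_sum z).congr fun j => (Real.norm_of_nonneg (ht_nn z hz j)).symm
  -- the key inequality on products of sums
  have key : (∑' j, t x j) * (∑' j, s y j) < (∑' j, t y j) * (∑' j, s x j) := by
    rw [tsum_mul_tsum_of_summable_norm (hnorm_t x hx) (hnorm_s y hy),
      tsum_mul_tsum_of_summable_norm (hnorm_t y hy) (hnorm_s x hx)]
    set F : ℕ × ℕ → ℝ := fun p => t x p.1 * s y p.2 with hF_def
    set G : ℕ × ℕ → ℝ := fun p => t y p.1 * s x p.2 with hG_def
    have hF_sum : Summable F :=
      (ht_sum x).mul_of_nonneg (hs_sum y) (ht_nn x hx) (hs_nn y hy)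
    have hG_sum : Summable G :=
      (ht_sum y).mul_of_nonneg (hs_sum x) (ht_nn y hy) (hs_nn x hx)
    have hD_sum : Summable (fun p => G p - F p) := hG_sum.sub hF_sum
    rw [← sub_pos, ← Summable.tsum_sub hG_sum hF_sum]
    -- symmetrize
    have hswap_sum : Summable (fun p : ℕ × ℕ => G p.swap - F p.swap) := by
      have := ((Equiv.prodComm ℕ ℕ).summable_iff (f := fun p : ℕ × ℕ => G p - F p)).2 hD_sum
      exact this
    have hswap_eq : (∑' p : ℕ × ℕ, (G p.swap - F p.swap)) = ∑' p : ℕ × ℕ, (G p - F p) := by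
      have := (Equiv.prodComm ℕ ℕ).tsum_eq (fun p : ℕ × ℕ => G p - F p)
      simpa using this
    have hdouble : (2:ℝ) * (∑' p : ℕ × ℕ, (G p - F p))
        = ∑' p : ℕ × ℕ, ((G p - F p) + (G p.swap - F p.swap)) := by
      rw [Summable.tsum_add hD_sum hswap_sum, hswap_eq]; ring
    -- pointwise formula for the symmetrized term
    have hterm : ∀ p : ℕ × ℕ, (G p - F p) + (G p.swap - F p.swap)
        = (if k ≤ p.1 ∧ k ≤ p.2 then
            ((p.1 : ℝ) - (p.2 : ℝ)) * (y ^ p.1 * x ^ p.2 - x ^ p.1 * y ^ p.2)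
              / ((Nat.factorial p.1 : ℝ) * (Nat.factorial p.2 : ℝ))
          else 0) := by
      rintro ⟨a, b⟩
      simp only [hF_def, hG_def, hs_def, ht_def, Prod.swap_prod_mk]
      by_cases h1 : k ≤ a <;> by_cases h2 : k ≤ b <;> simp [h1, h2]
      have ha : ((Nat.factorial a : ℝ)) ≠ 0 := Nat.cast_ne_zero.2 a.factorial_ne_zero
      have hb : ((Nat.factorial b : ℝ)) ≠ 0 := Nat.cast_ne_zero.2 b.factorial_ne_zero
      field_simp
      ring
    have hterm_nn : ∀ p : ℕ × ℕ, 0 ≤ (G p - F p) + (G p.swap - F p.swap) := by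
      intro p
      rw [hterm p]
      split
      · apply div_nonneg (sym_nonneg hx hxy.le p.1 p.2) (by positivity)
      · exact le_refl _
    have hterm_pos : 0 < (G (k+1, k) - F (k+1, k)) + (G ((k+1 : ℕ), k).swap - F ((k+1 : ℕ), k).swap) := by
      rw [hterm (k+1, k)]
      have h1 : k ≤ k + 1 := Nat.le_succ k
      simp only [le_refl, h1, and_self, if_true]
      apply div_pos _ (by positivity)
      have hstrict : x ^ (k+1) * y ^ k < x ^ k * y ^ (k+1) := by
        have e1 : x ^ (k+1) * y ^ k = (x ^ k * y ^ k) * x := by rw [pow_succ]; ring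
        have e2 : x ^ k * y ^ (k+1) = (x ^ k * y ^ k) * y := by rw [pow_succ]; ring
        rw [e1, e2]
        exact mul_lt_mul_of_pos_left hxy (by positivity)
      push_cast
      nlinarith
    have hsym_sum : Summable (fun p : ℕ × ℕ => (G p - F p) + (G p.swap - F p.swap)) :=
      hD_sum.add hswap_sum
    have : 0 < ∑' p : ℕ × ℕ, ((G p - F p) + (G p.swap - F p.swap)) :=
      Summable.tsum_pos hsym_sum hterm_nn (k+1, k) hterm_pos
    linarith [hdouble ▸ this]
  -- convert to the statement about truncMean
  have hSx := truncExpSum_pos k hx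
  have hSy := truncExpSum_pos k hy
  unfold truncMean
  rw [div_lt_div_iff₀ hSx hSy, mul_truncExpSum k x, mul_truncExpSum k y]
  exact key

end Stmt2Aux
namespace Stmt2Aux

lemma truncExpSum_continuous (k : ℕ) : Continuous (fun z => truncExpSum k z) := by
  have : (fun z => truncExpSum k z)
      = fun z => Real.exp z - ∑ j ∈ Finset.range k, z ^ j / (Nat.factorial j : ℝ) := by
    funext z; exact truncExpSum_closed k z
  rw [this]
  exact Real.continuous_exp.sub (continuous_finset_sum _ fun i _ => (continuous_pow i).div_const _)

lemma truncMean_continuousOn (k : ℕ) : ContinuousOn (truncMean k) (Set.Ioi (0:ℝ)) := by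
  unfold truncMean
  apply ContinuousOn.div
  · exact (continuous_id.mul (truncExpSum_continuous (k-1))).continuousOn
  · exact (truncExpSum_continuous k).continuousOn
  · intro z hz
    exact (truncExpSum_pos k hz).ne'

end Stmt2Aux

open Stmt2Aux in
/-- `ψ_k(0+) = k`, `ψ_k(∞) = ∞`, and for `m > k` the equation `ψ_k(z) = m`
has a unique positive root. -/
theorem stmt2 (k : ℕ) :
    Tendsto (truncMean k) (nhdsWithin 0 (Set.Ioi 0)) (nhds (k : ℝ)) ∧
    Tendsto (truncMean k) atTop atTop ∧
    (∀ m : ℝ, (k : ℝ) < m → ∃! z : ℝ, 0 < z ∧ truncMean k z = m) := by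
  refine ⟨truncMean_tendsto_zero k, truncMean_tendsto_atTop k, ?_⟩
  intro m hm
  have hm0 : 0 < m := lt_of_le_of_lt (Nat.cast_nonneg k) hm
  -- find a small point with value < m
  have hev : ∀ᶠ z in nhdsWithin (0:ℝ) (Set.Ioi 0), truncMean k z < m ∧ 0 < z := by
    have h1 : ∀ᶠ z in nhdsWithin (0:ℝ) (Set.Ioi 0), truncMean k z < m :=
      (truncMean_tendsto_zero k).eventually (eventually_lt_nhds hm)
    filter_upwards [h1, self_mem_nhdsWithin] with z hz1 hz2
    exact ⟨hz1, hz2⟩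
  obtain ⟨z₁, hz₁m, hz₁0⟩ := hev.exists
  -- big point
  set z₂ : ℝ := max m z₁ + 1 with hz₂_def
  have hz₁₂ : z₁ ≤ z₂ := le_trans (le_max_right m z₁) (by linarith [le_refl (max m z₁)])
  have hz₂0 : 0 < z₂ := lt_of_lt_of_le hz₁0 hz₁₂
  have hz₂m : m ≤ truncMean k z₂ :=
    le_trans (le_trans (le_max_left m z₁) (by linarith [le_refl (max m z₁)])) (le_truncMean k hz₂0)
  have hsub : Set.Icc z₁ z₂ ⊆ Set.Ioi (0:ℝ) := fun w hw => lt_of_lt_of_le hz₁0 hw.1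
  have hivt := intermediate_value_Icc hz₁₂ ((truncMean_continuousOn k).mono hsub)
  have hmem : m ∈ Set.Icc (truncMean k z₁) (truncMean k z₂) := ⟨hz₁m.le, hz₂m⟩
  obtain ⟨z, hzI, hzm⟩ := hivt hmem
  refine ⟨z, ⟨lt_of_lt_of_le hz₁0 hzI.1, hzm⟩, ?_⟩
  rintro w ⟨hw0, hwm⟩
  exact (truncMean_strictMonoOn k).injOn (Set.mem_Ioi.2 hw0)
    (Set.mem_Ioi.2 (lt_of_lt_of_le hz₁0 hzI.1)) (by rw [hwm, hzm])
end

section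
/- For k ≥ 1, φ_k(z) := z·P(Poi(z)=k−1)/P(Poi(z)≥k) is strictly decreasing in z on (0,∞), with φ_k(0+) = k and φ_k(∞) = 0. -/
open Real Filter Set

noncomputable def gfun (k : ℕ) (z : ℝ) : ℝ := ∑' j : ℕ, z ^ j / (Nat.factorial (j + k) : ℝ)

lemma summable_gfun (k : ℕ) (z : ℝ) : Summable (fun j : ℕ => z ^ j / (Nat.factorial (j + k) : ℝ)) := by
  apply Summable.of_norm_bounded (Real.summable_pow_div_factorial |z|)
  intro j
  rw [norm_div, norm_pow, Real.norm_eq_abs]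
  apply div_le_div_of_nonneg_left ?_ ?_ ?_
  · positivity
  · positivity
  · rw [Real.norm_eq_abs, Nat.abs_cast]
    exact_mod_cast Nat.factorial_le (Nat.le_add_right j k)

lemma truncExpSum_eq (k : ℕ) (z : ℝ) : truncExpSum k z = z ^ k * gfun k z := by
  have h1 : truncExpSum k z = ∑' j : ℕ, z ^ (j + k) / (Nat.factorial (j + k) : ℝ) := by
    rw [truncExpSum]
    refine (Function.Injective.tsum_eq (g := fun j : ℕ => j + k) (add_left_injective k) ?_).symm.trans ?_
    · intro x hx
      simp only [Function.mem_support, ne_eq, ite_eq_right_iff, not_forall] at hx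
      exact ⟨x - k, Nat.sub_add_cancel hx.1⟩
    · apply tsum_congr; intro j; rw [if_pos (Nat.le_add_left k j)]
  rw [h1, gfun, ← tsum_mul_left]
  apply tsum_congr; intro j
  rw [pow_add, mul_comm (z^j)]
  ring

lemma gfun_pos {k : ℕ} {z : ℝ} (hz : 0 ≤ z) : 0 < gfun k z := by
  apply Summable.tsum_pos (summable_gfun k z) (fun j => by positivity) 0
  simp only [pow_zero, zero_add]
  positivity

lemma phiP_eq {k : ℕ} (hk : 1 ≤ k) {z : ℝ} (hz : 0 < z) :
    phiP k z = ((Nat.factorial (k-1) : ℝ) * gfun k z)⁻¹ := by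
  rw [phiP, if_neg (by omega), poisTail, truncExpSum_eq]
  have hzk : z ^ k = z * z ^ (k - 1) := by
    rw [← pow_succ']
    congr 1; omega
  have h1 : (0:ℝ) < Nat.factorial (k-1) := by positivity
  have h2 : (0:ℝ) < Real.exp (-z) := Real.exp_pos _
  have h3 : 0 < gfun k z := gfun_pos hz.le
  have h4 : (0:ℝ) < z ^ (k-1) := by positivity
  rw [hzk]
  field_simp

lemma gfun_lt {k : ℕ} {a b : ℝ} (ha : 0 ≤ a) (hab : a < b) : gfun k a < gfun k b := by
  apply Summable.tsum_lt_tsum (i := 1) ?_ ?_ (summable_gfun k a) (summable_gfun k b)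
  · intro j
    apply div_le_div_of_nonneg_right ?_ (by positivity)
    exact pow_le_pow_left₀ ha hab.le j
  · simp only [pow_one]
    apply div_lt_div_of_pos_right hab (by positivity)

lemma gfun_zero (k : ℕ) : gfun k 0 = (Nat.factorial k : ℝ)⁻¹ := by
  rw [gfun, tsum_eq_single 0 ?_]
  · simp
  · intro j hj
    simp [zero_pow hj]

lemma gfun_succ (k : ℕ) (z : ℝ) :
    gfun k z = (Nat.factorial k : ℝ)⁻¹ + z * gfun (k+1) z := by
  rw [gfun, Summable.tsum_eq_zero_add (summable_gfun k z)]
  congr 1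
  · simp
  · rw [gfun, ← tsum_mul_left]
    apply tsum_congr; intro j
    have : j + 1 + k = j + (k+1) := by omega
    rw [this, pow_succ']
    ring

lemma gfun_tendsto (k : ℕ) : Tendsto (gfun k) (nhdsWithin 0 (Set.Ioi 0)) (nhds (gfun k 0)) := by
  apply tendsto_of_tendsto_of_tendsto_of_le_of_le'
    (g := fun _ => gfun k 0) (h := fun z => gfun k 0 + z * gfun (k+1) 1)
  · exact tendsto_const_nhds
  · have : Tendsto (fun z : ℝ => gfun k 0 + z * gfun (k+1) 1) (nhdsWithin 0 (Set.Ioi 0))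
        (nhds (gfun k 0 + 0 * gfun (k+1) 1)) := by
      apply Tendsto.mono_left ?_ nhdsWithin_le_nhds
      exact (tendsto_id.mul_const _).const_add _
    simpa using this
  · filter_upwards [self_mem_nhdsWithin] with z hz
    exact (gfun_lt le_rfl hz).le
  · filter_upwards [Ioc_mem_nhdsGT_of_mem (Set.left_mem_Ico.2 one_pos)] with z hz
    rw [gfun_succ, gfun_zero]
    gcongr
    · exact hz.1.le
    · rcases eq_or_lt_of_le hz.2 with h | h
      · rw [h]
      · exact (gfun_lt hz.1.le h).le

/-- `φ_k` is strictly decreasing on `(0,∞)`, `φ_k(0+) = k`, `φ_k(∞) = 0`. -/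
theorem stmt5 (k : ℕ) (hk : 1 ≤ k) :
    StrictAntiOn (phiP k) (Set.Ioi 0) ∧
    Tendsto (phiP k) (nhdsWithin 0 (Set.Ioi 0)) (nhds (k : ℝ)) ∧
    Tendsto (phiP k) atTop (nhds 0) := by
  have hfacpos : (0:ℝ) < (Nat.factorial (k-1) : ℝ) := by positivity
  refine ⟨?_, ?_, ?_⟩
  · intro a ha b hb hab
    simp only [Set.mem_Ioi] at ha hb
    rw [phiP_eq hk ha, phiP_eq hk hb]
    have h1 : 0 < (Nat.factorial (k-1) : ℝ) * gfun k a := by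
      exact mul_pos hfacpos (gfun_pos ha.le)
    have h2 : (Nat.factorial (k-1) : ℝ) * gfun k a < (Nat.factorial (k-1) : ℝ) * gfun k b :=
      mul_lt_mul_of_pos_left (gfun_lt ha.le hab) hfacpos
    exact inv_strictAnti₀ h1 h2
  · have hg := gfun_tendsto k
    have hne : (Nat.factorial (k-1) : ℝ) * gfun k 0 ≠ 0 :=
      (mul_pos hfacpos (gfun_pos le_rfl)).ne'
    have h2 : Tendsto (fun z => ((Nat.factorial (k-1) : ℝ) * gfun k z)⁻¹)
        (nhdsWithin 0 (Set.Ioi 0)) (nhds ((Nat.factorial (k-1) : ℝ) * gfun k 0)⁻¹) :=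
      (hg.const_mul _).inv₀ hne
    have h3 : ((Nat.factorial (k-1) : ℝ) * gfun k 0)⁻¹ = (k : ℝ) := by
      rw [gfun_zero]
      have hfk : (Nat.factorial k : ℝ) = k * Nat.factorial (k-1) := by
        exact_mod_cast (Nat.mul_factorial_pred (by omega)).symm
      rw [hfk]
      have hk0 : (k:ℝ) ≠ 0 := by positivity
      field_simp
    rw [h3] at h2
    apply h2.congr'
    filter_upwards [self_mem_nhdsWithin] with z hz
    exact (phiP_eq hk hz).symm
  · have hA : Tendsto (fun z => (Nat.factorial (k-1) : ℝ) * gfun k z) atTop atTop := by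
      apply tendsto_atTop_mono'
        (f₁ := fun z => (Nat.factorial (k-1) : ℝ) * (z / (Nat.factorial (1+k) : ℝ))) atTop
      · filter_upwards [eventually_ge_atTop (0:ℝ)] with z hz
        apply mul_le_mul_of_nonneg_left ?_ hfacpos.le
        have := Summable.le_tsum (summable_gfun k z) 1 (fun j _ => by positivity)
        simpa [gfun] using this
      · exact (tendsto_id.atTop_div_const (by positivity)).const_mul_atTop hfacpos
    have h0 := hA.inv_tendsto_atTop
    apply h0.congr'
    filter_upwards [eventually_gt_atTop (0:ℝ)] with z hz
    simp only [Pi.inv_apply]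
    exact (phiP_eq hk hz).symm
end

section
/- For all z > 0 and k ≥ 1, φ_k(z) − 1 < φ_{k−1}(z), i.e., 1 − φ_k(z) + φ_{k−1}(z) > 0. -/
open Real Filter Set

private lemma fact_shift' (i j : ℕ) (hij : i ≤ j) : ∀ d, d ≤ i →
    Nat.factorial i * Nat.factorial j ≤ Nat.factorial (i - d) * Nat.factorial (j + d) := by
  intro d
  induction d with
  | zero => simp
  | succ d ih =>
    intro hd
    refine (ih (by omega)).trans ?_
    have h1 : i - d = (i - (d+1)) + 1 := by omega
    have h2 : j + (d+1) = (j + d) + 1 := by omega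
    rw [h1, h2, Nat.factorial_succ, Nat.factorial_succ]
    have h3 : (i - (d+1)) + 1 ≤ (j + d) + 1 := by omega
    calc (i - (d+1) + 1) * (i - (d+1)).factorial * (j + d).factorial
        = (i - (d+1) + 1) * ((i - (d+1)).factorial * (j + d).factorial) := by ring
      _ ≤ ((j + d) + 1) * ((i - (d+1)).factorial * (j + d).factorial) :=
          Nat.mul_le_mul_right _ h3
      _ = (i - (d+1)).factorial * (((j + d) + 1) * (j + d).factorial) := by ring

private lemma fact_min' (i j m : ℕ) (hi : m + 1 ≤ i) (hj : m + 1 ≤ j) :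
    Nat.factorial i * Nat.factorial j ≤ Nat.factorial m * Nat.factorial (i + j - m) := by
  rcases le_total i j with h | h
  · have := fact_shift' i j h (i - m) (by omega)
    have e1 : i - (i - m) = m := by omega
    have e2 : j + (i - m) = i + j - m := by omega
    rwa [e1, e2] at this
  · have := fact_shift' j i h (j - m) (by omega)
    have e1 : j - (j - m) = m := by omega
    have e2 : i + (j - m) = i + j - m := by omega
    rw [e1, e2] at this
    calc Nat.factorial i * Nat.factorial j = Nat.factorial j * Nat.factorial i :=
          Nat.mul_comm _ _
      _ ≤ _ := this

/-- for `z > 0` and `k ≥ 1`, `φ_k(z) − 1 < φ_{k−1}(z)`. -/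
theorem stmt7 (k : ℕ) (hk : 1 ≤ k) (z : ℝ) (hz : 0 < z) :
    phiP k z - 1 < phiP (k - 1) z := by
  obtain ⟨m, rfl⟩ : ∃ m, k = m + 1 := ⟨k - 1, by omega⟩
  clear hk
  set a : ℕ → ℝ := fun j => z ^ j / (Nat.factorial j : ℝ) with ha
  have hapos : ∀ j, 0 < a j := fun j =>
    div_pos (pow_pos hz j) (by exact_mod_cast j.factorial_pos)
  have hsa : Summable a := Real.summable_pow_div_factorial z
  have hind : ∀ m' : ℕ, Summable (fun j => if m' ≤ j then a j else 0) := by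
    intro m'
    refine hsa.of_nonneg_of_le (fun j => ?_) (fun j => ?_)
    · by_cases h : m' ≤ j <;> simp [h, (hapos j).le]
    · by_cases h : m' ≤ j <;> simp [h, (hapos j).le]
  have htr : ∀ m' : ℕ, truncExpSum m' z = ∑' j, if m' ≤ j then a j else 0 := fun _ => rfl
  have hTpos : ∀ m' : ℕ, 0 < truncExpSum m' z := by
    intro m'
    rw [htr m']
    refine Summable.tsum_pos (hind m') (fun j => ?_) m' (by simp [hapos m'])
    by_cases h : m' ≤ j <;> simp [h, (hapos j).le]
  have hfacpos : ∀ n : ℕ, (0:ℝ) < (Nat.factorial n : ℝ) := fun n => by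
    exact_mod_cast n.factorial_pos
  have hfrac : ∀ i j : ℕ,
      a i * a j = z ^ (i + j) / ((Nat.factorial i * Nat.factorial j : ℕ) : ℝ) := by
    intro i j
    simp only [ha]
    rw [div_mul_div_comm, ← pow_add]
    push_cast
    ring_nf
  have hreal : ∀ i j : ℕ, m + 1 ≤ i → m + 1 ≤ j → a m * a (i + j - m) ≤ a i * a j := by
    intro i j hi hj
    rw [hfrac, hfrac]
    have e : m + (i + j - m) = i + j := by omega
    rw [e]
    apply div_le_div_of_nonneg_left (by positivity) (by positivity)
    exact_mod_cast fact_min' i j m hi hj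
  have hstrict0 : a m * a (m + 2) < a (m+1) * a (m+1) := by
    rw [hfrac, hfrac]
    have e1 : m + (m + 2) = (m+1) + (m+1) := by omega
    rw [e1]
    apply div_lt_div_of_pos_left (by positivity) (by positivity)
    have : Nat.factorial (m+1) * Nat.factorial (m+1)
        < Nat.factorial m * Nat.factorial (m+2) := by
      rw [Nat.factorial_succ (m+1), Nat.factorial_succ m]
      calc (m+1) * Nat.factorial m * Nat.factorial (m+1)
          < (m+2) * (Nat.factorial m * Nat.factorial (m+1)) := by
            have := Nat.mul_pos m.factorial_pos (m+1).factorial_pos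
            nlinarith
        _ = Nat.factorial m * ((m+2) * Nat.factorial (m+1)) := by ring
    exact_mod_cast this
  -- shift lemma:  z * T_m = ∑_{j ≥ m+1} j a_j
  set F : ℕ → ℝ := fun j => if m + 1 ≤ j then (j : ℝ) * a j else 0 with hFdef
  have hFsucc : ∀ n : ℕ, F (n + 1) = z * (if m ≤ n then a n else 0) := by
    intro n
    by_cases h : m ≤ n
    · have h' : m + 1 ≤ n + 1 := by omega
      simp only [hFdef, if_pos h', if_pos h, ha]
      rw [Nat.factorial_succ, pow_succ]
      push_cast
      have h0 : ((n : ℝ) + 1) ≠ 0 := by positivity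
      have h1 : (Nat.factorial n : ℝ) ≠ 0 := (hfacpos n).ne'
      field_simp
    · have h' : ¬ (m + 1 ≤ n + 1) := by omega
      simp [hFdef, if_neg h', if_neg h]
  have hsF : Summable F := by
    refine (summable_nat_add_iff 1).mp ?_
    exact Summable.congr ((hind m).mul_left z) (fun n => (hFsucc n).symm)
  have hshift : z * truncExpSum m z = ∑' j, F j := by
    rw [Summable.tsum_eq_zero_add hsF]
    have hF0 : F 0 = 0 := by simp [hFdef]
    rw [hF0, zero_add, tsum_congr hFsucc, tsum_mul_left, htr m]
  -- the series f
  set f : ℕ → ℝ := fun j => if m + 1 ≤ j then ((j : ℝ) - (m+1)) * (a m * a j) else 0 with hfdef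
  have hfe : ∀ j, f j = a m * F j - (((m:ℝ)+1) * a m) * (if m + 1 ≤ j then a j else 0) := by
    intro j
    by_cases h : m + 1 ≤ j <;> simp only [hfdef, hFdef, h, ↓reduceIte] <;> ring
  have hsf : Summable f :=
    Summable.congr ((hsF.mul_left (a m)).sub (((hind (m+1)).mul_left (((m:ℝ)+1) * a m))))
      (fun j => (hfe j).symm)
  have hXf : z * a m * truncExpSum m z - ((m:ℝ)+1) * a m * truncExpSum (m+1) z = ∑' j, f j := by
    rw [tsum_congr hfe, Summable.tsum_sub (hsF.mul_left (a m))
      ((hind (m+1)).mul_left (((m:ℝ)+1) * a m)), tsum_mul_left, tsum_mul_left, ← hshift,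
      htr (m+1)]
    ring
  -- Cauchy product
  set I : ℕ → ℝ := fun j => if m + 1 ≤ j then a j else 0 with hIdef
  have hInonneg : ∀ j, 0 ≤ I j := by
    intro j; by_cases h : m + 1 ≤ j <;> simp only [hIdef, h, ↓reduceIte, le_refl, (hapos j).le]
  have hnorm : Summable (fun j => ‖I j‖) :=
    Summable.congr (hind (m+1)) (fun j => (Real.norm_of_nonneg (hInonneg j)).symm)
  set A : ℕ → ℝ := fun n => ∑ kl ∈ Finset.HasAntidiagonal.antidiagonal n, I kl.1 * I kl.2 with hAdef
  have hAnonneg : ∀ n, 0 ≤ A n := fun n =>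
    Finset.sum_nonneg (fun kl _ => mul_nonneg (hInonneg _) (hInonneg _))
  have hA : truncExpSum (m+1) z * truncExpSum (m+1) z = ∑' n, A n := by
    rw [htr (m+1)]
    exact tsum_mul_tsum_eq_tsum_sum_antidiagonal_of_summable_norm hnorm hnorm
  have hsA : Summable A :=
    (summable_norm_sum_mul_antidiagonal_of_summable_norm hnorm hnorm).of_norm
  -- the series g
  set g : ℕ → ℝ := fun n =>
    if 2*m + 2 ≤ n then ((n - (2*m+1) : ℕ) : ℝ) * (a m * a (n - m)) else 0 with hgdef
  have hfg : ∑' j, f j = ∑' n, g n := by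
    apply tsum_eq_tsum_of_ne_zero_bij (fun n => (n : ℕ) - m)
    · rintro ⟨x, hx⟩ ⟨y, hy⟩ hxy
      have hx2 : 2*m + 2 ≤ x := by
        by_contra h
        exact hx (by simp [hgdef, if_neg h])
      have hy2 : 2*m + 2 ≤ y := by
        by_contra h
        exact hy (by simp [hgdef, if_neg h])
      have hxy' : x - m = y - m := hxy
      exact Subtype.ext (show x = y by omega)
    · intro j hj
      have hj1 : m + 1 ≤ j := by
        by_contra h
        exact hj (by simp only [hfdef, if_neg h])
      have hj2 : m + 2 ≤ j := by
        rcases Nat.lt_or_ge j (m+2) with h | h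
        · exfalso
          have : j = m + 1 := by omega
          apply hj
          simp [hfdef, this]
        · exact h
      refine ⟨⟨j + m, ?_⟩, ?_⟩
      · have h2 : 2*m + 2 ≤ j + m := by omega
        have e1 : j + m - (2*m+1) = j - (m+1) := by omega
        have e2 : j + m - m = j := by omega
        simp only [hgdef, if_pos h2, e1, e2, Function.mem_support]
        have : (0:ℝ) < ((j - (m+1) : ℕ) : ℝ) * (a m * a j) := by
          have : 0 < j - (m+1) := by omega
          positivity
        exact this.ne'
      · simp only
        omega
    · rintro ⟨n, hn⟩
      have hn2 : 2*m + 2 ≤ n := by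
        by_contra h
        exact hn (by simp [hgdef, if_neg h])
      simp only [hfdef, hgdef, if_pos hn2]
      have h1 : m + 1 ≤ n - m := by omega
      rw [if_pos h1]
      have e1 : ((n - m : ℕ) : ℝ) - ((m:ℝ)+1) = ((n - (2*m+1) : ℕ) : ℝ) := by
        have e : (n - m : ℕ) = (n - (2*m+1)) + (m+1) := by omega
        rw [e]
        push_cast
        ring
      rw [e1]
  have hgA : ∀ n, g n ≤ A n := by
    intro n
    by_cases hn : 2*m + 2 ≤ n
    · have hAn : A n = ∑ i ∈ Finset.range (n+1), I i * I (n - i) := by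
        simp only [hAdef, Finset.Nat.antidiagonal_eq_map, Finset.sum_map,
          Function.Embedding.coeFn_mk]
        rfl
      have hgn : g n = ∑ i ∈ Finset.range (n+1),
          (if m + 1 ≤ i ∧ i ≤ n - (m+1) then a m * a (n - m) else 0) := by
        rw [← Finset.sum_filter]
        have hfil : (Finset.range (n+1)).filter (fun i => m + 1 ≤ i ∧ i ≤ n - (m+1))
            = Finset.Icc (m+1) (n - (m+1)) := by
          ext i
          simp only [Finset.mem_filter, Finset.mem_range, Finset.mem_Icc]
          omega
        rw [hfil, Finset.sum_const, Nat.card_Icc, nsmul_eq_mul]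
        rw [hgdef]
        simp only [if_pos hn]
        congr 2
        omega
      rw [hAn, hgn]
      apply Finset.sum_le_sum
      intro i hi
      rw [Finset.mem_range] at hi
      by_cases h : m + 1 ≤ i ∧ i ≤ n - (m+1)
      · rw [if_pos h]
        have h1 : m + 1 ≤ i := h.1
        have h2 : m + 1 ≤ n - i := by omega
        rw [hIdef]
        simp only [if_pos h1, if_pos h2]
        have e : n - m = i + (n - i) - m := by omega
        rw [e]
        exact hreal i (n - i) h1 h2
      · rw [if_neg h]
        exact mul_nonneg (hInonneg _) (hInonneg _)
    · rw [hgdef]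
      simp only [if_neg hn]
      exact hAnonneg n
  have hgnonneg : ∀ n, 0 ≤ g n := by
    intro n
    by_cases h : 2*m + 2 ≤ n
    · simp only [hgdef, if_pos h]
      positivity
    · simp [hgdef, if_neg h]
  have hsg : Summable g := hsA.of_nonneg_of_le hgnonneg hgA
  -- strictness at n = 2m+2
  have hstrict : g (2*m+2) < A (2*m+2) := by
    have hg2 : g (2*m+2) = a m * a (m+2) := by
      simp only [hgdef, if_pos (le_refl (2*m+2))]
      have e1 : 2*m+2 - (2*m+1) = 1 := by omega
      have e2 : 2*m+2 - m = m + 2 := by omega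
      rw [e1, e2]
      push_cast
      ring
    have hA2 : a (m+1) * a (m+1) ≤ A (2*m+2) := by
      have hmem : ((m+1, m+1) : ℕ × ℕ) ∈ Finset.HasAntidiagonal.antidiagonal (2*m+2) := by
        rw [Finset.HasAntidiagonal.mem_antidiagonal]
        omega
      have h4 := Finset.single_le_sum (f := fun kl : ℕ × ℕ => I kl.1 * I kl.2)
        (fun kl _ => mul_nonneg (hInonneg _) (hInonneg _)) hmem
      have h5 : I (m+1) * I (m+1) = a (m+1) * a (m+1) := by simp [hIdef]
      calc a (m+1) * a (m+1) = I (m+1) * I (m+1) := h5.symm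
        _ ≤ ∑ kl ∈ Finset.HasAntidiagonal.antidiagonal (2*m+2), I kl.1 * I kl.2 := h4
        _ = A (2*m+2) := by simp only [hAdef]
    rw [hg2]
    exact lt_of_lt_of_le hstrict0 hA2
  have hlt : ∑' n, g n < ∑' n, A n := Summable.tsum_lt_tsum hgA hstrict hsg hsA
  -- the key inequality K
  have hK : z * a m * truncExpSum m z - ((m:ℝ)+1) * a m * truncExpSum (m+1) z
      < truncExpSum (m+1) z * truncExpSum (m+1) z := by
    rw [hXf, hfg, hA]
    exact hlt
  -- split lemma : T_m = a m + T_{m+1}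
  have hsplit : truncExpSum m z = a m + truncExpSum (m+1) z := by
    rw [htr m, htr (m+1)]
    have hpt : ∀ j, (if m ≤ j then a j else 0)
        = (if j = m then a m else 0) + (if m + 1 ≤ j then a j else 0) := by
      intro j
      by_cases h1 : j = m
      · subst h1
        simp
      · by_cases h2 : m ≤ j
        · have h3 : m + 1 ≤ j := by omega
          simp [h1, h2, h3]
        · have h3 : ¬ (m + 1 ≤ j) := by omega
          simp [h1, h2, h3]
    rw [tsum_congr hpt, Summable.tsum_add ((hasSum_ite_eq m (a m)).summable) (hind (m+1)),
      tsum_ite_eq]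
  -- unfold phiP
  have hexp : Real.exp (-z) ≠ 0 := (Real.exp_pos _).ne'
  have hTk : (0:ℝ) < truncExpSum (m+1) z := hTpos (m+1)
  have hTk1 : (0:ℝ) < truncExpSum m z := hTpos m
  have hphik : phiP (m+1) z = z * a m / truncExpSum (m+1) z := by
    rw [phiP, if_neg (by omega : ¬ (m+1 = 0)), poisTail]
    simp only [Nat.add_sub_cancel, ha]
    rw [mul_comm (Real.exp (-z)) (truncExpSum (m+1) z)]
    field_simp
  have hphik1 : phiP (m+1-1) z = ((m:ℝ)+1-1) * a m / truncExpSum m z := by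
    rcases Nat.eq_zero_or_pos m with hm0 | hm0
    · subst hm0
      simp [phiP]
    · have hm1 : ¬ (m = 0) := by omega
      simp only [Nat.add_sub_cancel]
      rw [phiP, if_neg hm1, poisTail]
      have e1 : ((m:ℝ)+1-1) = ((m:ℕ):ℝ) := by push_cast; ring
      rw [e1]
      obtain ⟨p, rfl⟩ : ∃ p, m = p + 1 := ⟨m - 1, by omega⟩
      simp only [Nat.add_sub_cancel, ha]
      rw [Nat.factorial_succ]
      rw [mul_comm (Real.exp (-z)) (truncExpSum (p+1) z)]
      have hfp : (Nat.factorial p : ℝ) ≠ 0 := (hfacpos p).ne'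
      have hp1 : ((p:ℝ)+1) ≠ 0 := by positivity
      field_simp
      push_cast
      ring
  rw [hphik, hphik1]
  rw [div_sub_one hTk.ne', div_lt_div_iff₀ hTk hTk1]
  rw [hsplit] at hK ⊢
  nlinarith [hK, hTk, hapos m]
end
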